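/- Let v be a signed capacity on X and σ a permutation of X. For every x ∈ ℝⁿ_σ, letting p ∈ {0,…,n} be determined by x_{σ(p)} < 0 ≤ x_{σ(p+1)} (with conventions x_{σ(0)} = −∞ and x_{σ(n+1)} = +∞), the symmetric signed Choquet integral satisfies Č_v(x) = Σ_{i=1}^p x_{σ(i)} (C_v(1_{S↓_σ(i)}) − C_v(1_{S↓_σ(i−1)})) + Σ_{i=p+1}^n x_{σ(i)} (C_v(1_{S↑_σ(i)}) − C_v(1_{S↑_σ(i+1)})). -/

import Mathlib

/-- `S↑_σ(i)` (0-indexed): the set `{σ(i), σ(i+1), …, σ(n-1)}`.  For `i = n` it is empty. -/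
def SUp {n : ℕ} (σ : Equiv.Perm (Fin n)) (i : ℕ) : Finset (Fin n) :=
  (Finset.univ.filter (fun j : Fin n => i ≤ (j : ℕ))).image σ

/-- `S↓_σ(i)`: the set `{σ(0), …, σ(i-1)}`.  For `i = 0` it is empty. -/
def SDown {n : ℕ} (σ : Equiv.Perm (Fin n)) (i : ℕ) : Finset (Fin n) :=
  (Finset.univ.filter (fun j : Fin n => (j : ℕ) < i)).image σ

/-- Two tuples are comonotonic if some permutation sorts both nondecreasingly. -/
def Comonotone {n : ℕ} (x y : Fin n → ℝ) : Prop :=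
  ∃ σ : Equiv.Perm (Fin n), Monotone (x ∘ σ) ∧ Monotone (y ∘ σ)

/-- The tuple `r·1_S`. -/
def indTuple {n : ℕ} (S : Finset (Fin n)) (r : ℝ) : Fin n → ℝ :=
  fun j => if j ∈ S then r else 0

/-- The signed Choquet integral of `x` w.r.t. `v`, computed via a sorting permutation. -/
noncomputable def Cv {n : ℕ} (v : Finset (Fin n) → ℝ) (x : Fin n → ℝ) : ℝ :=
  ∑ i : Fin n,
    x (Tuple.sort x i) *
      (v (SUp (Tuple.sort x) (i : ℕ)) - v (SUp (Tuple.sort x) ((i : ℕ) + 1)))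

/-- `f` is the restriction to `Iⁿ` of a signed Choquet integral. -/
def IsSignedChoquetOn {n : ℕ} (I : Set ℝ) (f : (Fin n → ℝ) → ℝ) : Prop :=
  ∃ v : Finset (Fin n) → ℝ, v ∅ = 0 ∧
    ∀ σ : Equiv.Perm (Fin n), ∀ x : Fin n → ℝ, (∀ i, x i ∈ I) → Monotone (x ∘ σ) →
      f x = ∑ i : Fin n, x (σ i) * (v (SUp σ (i : ℕ)) - v (SUp σ ((i : ℕ) + 1)))

/-- `f` is the restriction to `Iⁿ` of a symmetric signed Choquet integral
`Č_v(x) = C_v(x⁺) - C_v(x⁻)`. -/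
def IsSymSignedChoquetOn {n : ℕ} (I : Set ℝ) (f : (Fin n → ℝ) → ℝ) : Prop :=
  ∃ v : Finset (Fin n) → ℝ, v ∅ = 0 ∧
    ∀ x : Fin n → ℝ, (∀ i, x i ∈ I) →
      f x = Cv v (fun i => max (x i) 0) - Cv v (fun i => max (-x i) 0)

/-- Comonotonic modularity (on tuples with entries in `D`). -/
def ComonModularOn {n : ℕ} (D : Set ℝ) (f : (Fin n → ℝ) → ℝ) : Prop :=
  ∀ x y : Fin n → ℝ, (∀ i, x i ∈ D) → (∀ i, y i ∈ D) → Comonotone x y →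
    f x + f y = f (fun i => min (x i) (y i)) + f (fun i => max (x i) (y i))

/-- Comonotonic additivity (on tuples with entries in `D`). -/
def ComonAdditiveOn {n : ℕ} (D : Set ℝ) (f : (Fin n → ℝ) → ℝ) : Prop :=
  ∀ x y : Fin n → ℝ, (∀ i, x i ∈ D) → (∀ i, y i ∈ D) → Comonotone x y →
    (∀ i, x i + y i ∈ D) → f (fun i => x i + y i) = f x + f y

/-- Comonotonic maxitivity. -/
def ComonMaxitiveOn {n : ℕ} (D : Set ℝ) (f : (Fin n → ℝ) → ℝ) : Prop :=
  ∀ x y : Fin n → ℝ, (∀ i, x i ∈ D) → (∀ i, y i ∈ D) → Comonotone x y →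
    f (fun i => max (x i) (y i)) = max (f x) (f y)

/-- Comonotonic minitivity. -/
def ComonMinitiveOn {n : ℕ} (D : Set ℝ) (f : (Fin n → ℝ) → ℝ) : Prop :=
  ∀ x y : Fin n → ℝ, (∀ i, x i ∈ D) → (∀ i, y i ∈ D) → Comonotone x y →
    f (fun i => min (x i) (y i)) = min (f x) (f y)

/-- Horizontal min-additivity. -/
def HorizMinAdditiveOn {n : ℕ} (D : Set ℝ) (f : (Fin n → ℝ) → ℝ) : Prop :=
  ∀ x : Fin n → ℝ, (∀ i, x i ∈ D) → ∀ c ∈ D, (∀ i, x i - min (x i) c ∈ D) →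
    f x = f (fun i => min (x i) c) + f (fun i => x i - min (x i) c)

/-- Horizontal max-additivity. -/
def HorizMaxAdditiveOn {n : ℕ} (D : Set ℝ) (f : (Fin n → ℝ) → ℝ) : Prop :=
  ∀ x : Fin n → ℝ, (∀ i, x i ∈ D) → ∀ c ∈ D, (∀ i, x i - max (x i) c ∈ D) →
    f x = f (fun i => max (x i) c) + f (fun i => x i - max (x i) c)

/-- Horizontal median-additivity (for `I` centered at `0`). -/
def HorizMedAdditiveOn {n : ℕ} (I : Set ℝ) (f : (Fin n → ℝ) → ℝ) : Prop :=
  ∀ x : Fin n → ℝ, (∀ i, x i ∈ I) → ∀ c ∈ I, 0 ≤ c →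
    f x = f (fun i => max (-c) (min (x i) c)) + f (fun i => x i - min (x i) c)
        + f (fun i => x i - max (x i) (-c))

/-- Invariance under horizontal min-differences (for domains of nonnegative tuples). -/
def InvHMinDiffOn {n : ℕ} (D : Set ℝ) (f : (Fin n → ℝ) → ℝ) : Prop :=
  ∀ x : Fin n → ℝ, (∀ i, x i ∈ D) → ∀ c ∈ D,
    f x - f (fun i => min (x i) c) =
      f (fun i => if x i ≤ c then 0 else x i) -
        f (fun i => min (if x i ≤ c then 0 else x i) c)

/-- Invariance under horizontal max-differences (for domains of nonpositive tuples). -/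
def InvHMaxDiffOn {n : ℕ} (D : Set ℝ) (f : (Fin n → ℝ) → ℝ) : Prop :=
  ∀ x : Fin n → ℝ, (∀ i, x i ∈ D) → ∀ c ∈ D,
    f x - f (fun i => max (x i) c) =
      f (fun i => if c ≤ x i then 0 else x i) -
        f (fun i => max (if c ≤ x i then 0 else x i) c)

/-- `⋀_{i ∈ S} x i`, with the convention that the empty infimum is `b`. -/
noncomputable def infWith {n : ℕ} (b : ℝ) (S : Finset (Fin n)) (x : Fin n → ℝ) : ℝ :=
  if h : S.Nonempty then S.inf' h x else b

/-- An `[a,b]`-valued capacity. -/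
def IsCapacityOn {n : ℕ} (a b : ℝ) (μ : Finset (Fin n) → ℝ) : Prop :=
  μ ∅ = a ∧ μ Finset.univ = b ∧ ∀ S T : Finset (Fin n), S ⊆ T → μ S ≤ μ T

/-- `f` is nondecreasing (in each argument) on tuples with entries in `D`. -/
def NondecreasingOn {n : ℕ} (D : Set ℝ) (f : (Fin n → ℝ) → ℝ) : Prop :=
  ∀ x y : Fin n → ℝ, (∀ i, x i ∈ D) → (∀ i, y i ∈ D) → (∀ i, x i ≤ y i) → f x ≤ f y

section AuxChoquet

lemma SUp_zero {n : ℕ} (σ : Equiv.Perm (Fin n)) : SUp σ 0 = Finset.univ := by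
  ext a
  simp only [SUp, Finset.mem_image, Finset.mem_filter, Finset.mem_univ, true_and,
    Nat.zero_le, iff_true]
  exact ⟨σ.symm a, σ.apply_symm_apply a⟩

lemma SUp_top {n : ℕ} (σ : Equiv.Perm (Fin n)) {k : ℕ} (hk : n ≤ k) : SUp σ k = ∅ := by
  simp only [SUp, Finset.image_eq_empty, Finset.filter_eq_empty_iff]
  intro j _; omega

lemma mem_SUp {n : ℕ} (σ : Equiv.Perm (Fin n)) (k : ℕ) (j : Fin n) :
    σ j ∈ SUp σ k ↔ k ≤ (j : ℕ) := by
  simp only [SUp, Finset.mem_image, Finset.mem_filter, Finset.mem_univ, true_and]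
  constructor
  · rintro ⟨a, ha, haj⟩; rwa [σ.injective haj] at ha
  · intro h; exact ⟨j, h, rfl⟩

lemma mem_SDown {n : ℕ} (σ : Equiv.Perm (Fin n)) (k : ℕ) (j : Fin n) :
    σ j ∈ SDown σ k ↔ (j : ℕ) < k := by
  simp only [SDown, Finset.mem_image, Finset.mem_filter, Finset.mem_univ, true_and]
  constructor
  · rintro ⟨a, ha, haj⟩; rwa [σ.injective haj] at ha
  · intro h; exact ⟨j, h, rfl⟩

lemma SUp_revPerm {n : ℕ} (σ : Equiv.Perm (Fin n)) (i : ℕ) :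
    SUp (Fin.revPerm.trans σ) i = SDown σ (n - i) := by
  ext a
  simp only [SUp, SDown, Finset.mem_image, Finset.mem_filter, Finset.mem_univ, true_and,
    Equiv.trans_apply, Fin.revPerm_apply]
  constructor
  · rintro ⟨j, hj, rfl⟩
    refine ⟨j.rev, ?_, rfl⟩
    have := j.isLt
    rw [Fin.val_rev]; omega
  · rintro ⟨j, hj, rfl⟩
    refine ⟨j.rev, ?_, by rw [Fin.rev_rev]⟩
    have := j.isLt
    rw [Fin.val_rev]; omega

lemma abel_aux (A V : ℕ → ℝ) (n : ℕ) :
    ∑ i ∈ Finset.range (n+1), A i * (V i - V (i+1)) =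
      A 0 * V 0 - A n * V (n+1) + ∑ i ∈ Finset.range n, (A (i+1) - A i) * V (i+1) := by
  induction n with
  | zero => simp; ring
  | succ m ih =>
    rw [Finset.sum_range_succ, ih, Finset.sum_range_succ]
    ring

lemma SUp_eq_filter {n : ℕ} (y : Fin n → ℝ) (σ : Equiv.Perm (Fin n)) (hσ : Monotone (y ∘ σ))
    (k : ℕ) (hk : k < n) (hjump : ∀ j : Fin n, (j : ℕ) < k → y (σ j) < y (σ ⟨k, hk⟩)) :
    SUp σ k = Finset.univ.filter (fun j => y (σ ⟨k, hk⟩) ≤ y j) := by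
  ext a
  simp only [SUp, Finset.mem_image, Finset.mem_filter, Finset.mem_univ, true_and]
  constructor
  · rintro ⟨j, hj, rfl⟩
    exact hσ (show (⟨k, hk⟩ : Fin n) ≤ j from hj)
  · intro ha
    refine ⟨σ.symm a, ?_, σ.apply_symm_apply a⟩
    by_contra h
    push_neg at h
    have h2 := hjump (σ.symm a) h
    rw [σ.apply_symm_apply] at h2
    linarith

/-- clip `i` into `Fin (m+1)`. -/
def clip (m i : ℕ) : Fin (m+1) := ⟨min i m, Nat.lt_succ_of_le (Nat.min_le_right _ _)⟩

lemma clip_eq {m i : ℕ} (h : i ≤ m) : (clip m i : ℕ) = i := by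
  simp only [clip]; omega

lemma sum_eq_abel {m : ℕ} (v : Finset (Fin (m+1)) → ℝ) (hv : v ∅ = 0)
    (y : Fin (m+1) → ℝ) (σ : Equiv.Perm (Fin (m+1))) :
    ∑ i : Fin (m+1), y (σ i) * (v (SUp σ (i : ℕ)) - v (SUp σ ((i : ℕ) + 1))) =
      y (σ 0) * v Finset.univ +
      ∑ i ∈ Finset.range m,
        (y (σ (clip m (i+1))) - y (σ (clip m i))) * v (SUp σ (i+1)) := by
  set A : ℕ → ℝ := fun i => y (σ (clip m i)) with hA
  set V : ℕ → ℝ := fun i => v (SUp σ i) with hV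
  have h1 : ∑ i : Fin (m+1), y (σ i) * (v (SUp σ (i : ℕ)) - v (SUp σ ((i : ℕ) + 1))) =
      ∑ i ∈ Finset.range (m+1), A i * (V i - V (i+1)) := by
    rw [← Fin.sum_univ_eq_sum_range (fun i => A i * (V i - V (i+1))) (m+1)]
    apply Finset.sum_congr rfl
    intro i _
    have hc : clip m (i : ℕ) = i := Fin.ext (clip_eq (by omega))
    simp only [hA, hV, hc]
  rw [h1, abel_aux A V m]
  have hV0 : V 0 = v Finset.univ := by rw [hV]; simp only []; rw [SUp_zero]
  have hVm : V (m+1) = 0 := by rw [hV]; simp only []; rw [SUp_top σ (le_refl (m+1)), hv]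
  have hA0 : A 0 = y (σ 0) := by
    rw [hA]; simp only []
    congr 2
  rw [hV0, hVm, hA0, mul_zero, sub_zero]

lemma sum_eq_sum_of_sorted {n : ℕ} (v : Finset (Fin n) → ℝ) (hv : v ∅ = 0)
    (y : Fin n → ℝ) (σ τ : Equiv.Perm (Fin n))
    (hσ : Monotone (y ∘ σ)) (hτ : Monotone (y ∘ τ)) :
    ∑ i : Fin n, y (σ i) * (v (SUp σ (i : ℕ)) - v (SUp σ ((i : ℕ) + 1))) =
    ∑ i : Fin n, y (τ i) * (v (SUp τ (i : ℕ)) - v (SUp τ ((i : ℕ) + 1))) := by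
  rcases n with _ | m
  · simp
  have hyστ : y ∘ σ = y ∘ τ :=
    (Tuple.comp_sort_eq_comp_iff_monotone.mpr hσ).trans
      (Tuple.comp_sort_eq_comp_iff_monotone.mpr hτ).symm
  have hyp : ∀ i : Fin (m+1), y (σ i) = y (τ i) := fun i => congrFun hyστ i
  rw [sum_eq_abel v hv y σ, sum_eq_abel v hv y τ]
  rw [hyp 0]
  congr 1
  apply Finset.sum_congr rfl
  intro i hi
  rw [Finset.mem_range] at hi
  rw [hyp (clip m (i+1)), hyp (clip m i)]
  rcases eq_or_lt_of_le (hτ (show clip m i ≤ clip m (i+1) by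
      simp only [Fin.le_def, clip]; omega)) with heq | hlt
  · simp only [Function.comp_apply] at heq
    rw [show y (τ (clip m (i+1))) - y (τ (clip m i)) = 0 by
      rw [← heq]; ring]
    ring
  · simp only [Function.comp_apply] at hlt
    have hc1 : (clip m (i+1) : Fin (m+1)) = ⟨i+1, by omega⟩ := Fin.ext (clip_eq (by omega))
    have hlt' : y (σ (clip m i)) < y (σ (clip m (i+1))) := by
      rw [hyp (clip m (i+1)), hyp (clip m i)]; exact hlt
    have hjσ : ∀ j : Fin (m+1), (j : ℕ) < i+1 → y (σ j) < y (σ ⟨i+1, by omega⟩) := by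
      intro j hj
      rw [← hc1]
      calc y (σ j) ≤ y (σ (clip m i)) := hσ (by simp only [Fin.le_def, clip]; omega)
        _ < _ := hlt'
    have hjτ : ∀ j : Fin (m+1), (j : ℕ) < i+1 → y (τ j) < y (τ ⟨i+1, by omega⟩) := by
      intro j hj
      rw [← hc1]
      calc y (τ j) ≤ y (τ (clip m i)) := hτ (by simp only [Fin.le_def, clip]; omega)
        _ < _ := hlt
    rw [SUp_eq_filter y σ hσ (i+1) (by omega) hjσ, SUp_eq_filter y τ hτ (i+1) (by omega) hjτ]
    rw [← hc1, hyp (clip m (i+1))]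

lemma cv_eq {n : ℕ} (v : Finset (Fin n) → ℝ) (hv : v ∅ = 0) (y : Fin n → ℝ)
    (σ : Equiv.Perm (Fin n)) (hσ : Monotone (y ∘ σ)) :
    Cv v y = ∑ i : Fin n, y (σ i) * (v (SUp σ (i : ℕ)) - v (SUp σ ((i : ℕ) + 1))) :=
  sum_eq_sum_of_sorted v hv y (Tuple.sort y) σ (Tuple.monotone_sort y) hσ

lemma telescope (V : ℕ → ℝ) (n k : ℕ) (hk : k ≤ n) :
    ∑ i ∈ Finset.range n, (if k ≤ i then (1:ℝ) else 0) * (V i - V (i+1)) = V k - V n := by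
  induction n with
  | zero =>
    have : k = 0 := Nat.le_zero.mp hk
    subst this; simp
  | succ m ih =>
    rw [Finset.sum_range_succ]
    rcases Nat.lt_or_ge m k with h | h
    · have hk' : k = m + 1 := by omega
      subst hk'
      rw [if_neg (by omega), Finset.sum_eq_zero (fun i hi => by
        rw [Finset.mem_range] at hi
        rw [if_neg (by omega), zero_mul])]
      ring
    · rw [ih h, if_pos h]
      ring

lemma cv_step {n : ℕ} (v : Finset (Fin n) → ℝ) (hv : v ∅ = 0) (τ : Equiv.Perm (Fin n))
    (y : Fin n → ℝ) (k : ℕ) (hk : k ≤ n)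
    (hy : ∀ i : Fin n, y (τ i) = if k ≤ (i : ℕ) then 1 else 0) :
    Cv v y = v (SUp τ k) := by
  have hmono : Monotone (y ∘ τ) := by
    intro a b hab
    simp only [Function.comp_apply, hy]
    have hab' : (a : ℕ) ≤ b := hab
    split_ifs with h1 h2 h2
    · exact le_refl _
    · omega
    · norm_num
    · exact le_refl _
  rw [cv_eq v hv y τ hmono]
  have h1 : ∑ i : Fin n, y (τ i) * (v (SUp τ (i : ℕ)) - v (SUp τ ((i : ℕ) + 1))) =
      ∑ i ∈ Finset.range n,
        (if k ≤ i then (1:ℝ) else 0) * (v (SUp τ i) - v (SUp τ (i + 1))) := by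
    rw [← Fin.sum_univ_eq_sum_range
      (fun i => (if k ≤ i then (1:ℝ) else 0) * (v (SUp τ i) - v (SUp τ (i + 1)))) n]
    exact Finset.sum_congr rfl (fun i _ => by rw [hy i])
  rw [h1, telescope (fun i => v (SUp τ i)) n k hk]
  show v (SUp τ k) - v (SUp τ n) = v (SUp τ k)
  rw [SUp_top τ (le_refl n), hv, sub_zero]

lemma cv_ind_up {n : ℕ} (v : Finset (Fin n) → ℝ) (hv : v ∅ = 0) (σ : Equiv.Perm (Fin n))
    (k : ℕ) (hk : k ≤ n) : Cv v (indTuple (SUp σ k) 1) = v (SUp σ k) := by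
  apply cv_step v hv σ _ k hk
  intro i
  simp only [indTuple, mem_SUp]

lemma cv_ind_down {n : ℕ} (v : Finset (Fin n) → ℝ) (hv : v ∅ = 0) (σ : Equiv.Perm (Fin n))
    (k : ℕ) (hk : k ≤ n) : Cv v (indTuple (SDown σ k) 1) = v (SDown σ k) := by
  have h := cv_step v hv (Fin.revPerm.trans σ) (indTuple (SDown σ k) 1) (n - k)
    (by omega) (fun i => by
      simp only [indTuple, Equiv.trans_apply, Fin.revPerm_apply]
      have : σ i.rev ∈ SDown σ k ↔ ((i.rev : ℕ) < k) := mem_SDown σ k i.rev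
      rw [Fin.val_rev] at this
      have hi := i.isLt
      by_cases hc : n - k ≤ (i : ℕ)
      · rw [if_pos hc, if_pos (this.mpr (by omega))]
      · rw [if_neg hc, if_neg (by rw [this]; omega)])
  rw [h, SUp_revPerm, Nat.sub_sub_self hk]

end AuxChoquet

theorem statement4 (n : ℕ) (hn : 0 < n) (v : Finset (Fin n) → ℝ) (hv : v ∅ = 0)
    (σ : Equiv.Perm (Fin n)) (x : Fin n → ℝ) (hx : Monotone (x ∘ σ))
    (p : ℕ) (hp : p ≤ n)
    (hneg : ∀ i : Fin n, (i : ℕ) < p → x (σ i) < 0)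
    (hpos : ∀ i : Fin n, p ≤ (i : ℕ) → 0 ≤ x (σ i)) :
    Cv v (fun i => max (x i) 0) - Cv v (fun i => max (-x i) 0) =
      (∑ i ∈ Finset.univ.filter (fun i : Fin n => (i : ℕ) < p),
        x (σ i) * (Cv v (indTuple (SDown σ ((i : ℕ) + 1)) 1)
          - Cv v (indTuple (SDown σ (i : ℕ)) 1)))
      + ∑ i ∈ Finset.univ.filter (fun i : Fin n => p ≤ (i : ℕ)),
          x (σ i) * (Cv v (indTuple (SUp σ (i : ℕ)) 1)
            - Cv v (indTuple (SUp σ ((i : ℕ) + 1)) 1)) := by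
  -- Step 1: positive part
  have hmonoP : Monotone ((fun i => max (x i) 0) ∘ σ) := fun a b hab =>
    max_le_max (hx hab) le_rfl
  have e1 : Cv v (fun i => max (x i) 0) =
      ∑ i ∈ Finset.univ.filter (fun i : Fin n => p ≤ (i : ℕ)),
        x (σ i) * (v (SUp σ (i : ℕ)) - v (SUp σ ((i : ℕ) + 1))) := by
    rw [cv_eq v hv _ σ hmonoP,
      ← Finset.sum_filter_add_sum_filter_not Finset.univ (fun i : Fin n => p ≤ (i : ℕ))]
    have hz : ∑ i ∈ Finset.univ.filter (fun i : Fin n => ¬ p ≤ (i : ℕ)),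
        (fun i => max (x i) 0) (σ i) * (v (SUp σ (i : ℕ)) - v (SUp σ ((i : ℕ) + 1))) = 0 := by
      apply Finset.sum_eq_zero
      intro i hi
      rw [Finset.mem_filter] at hi
      have : max (x (σ i)) 0 = 0 := max_eq_right (hneg i (by omega)).le
      simp only [this, zero_mul]
    rw [hz, add_zero]
    apply Finset.sum_congr rfl
    intro i hi
    rw [Finset.mem_filter] at hi
    simp only [max_eq_left (hpos i hi.2)]
  -- Step 2: negative part
  have hmonoM : Monotone ((fun i => max (-x i) 0) ∘ (Fin.revPerm.trans σ)) := by
    intro a b hab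
    simp only [Function.comp_apply, Equiv.trans_apply, Fin.revPerm_apply]
    exact max_le_max (neg_le_neg (hx (Fin.rev_le_rev.mpr hab))) le_rfl
  have e2 : Cv v (fun i => max (-x i) 0) =
      ∑ i ∈ Finset.univ.filter (fun i : Fin n => (i : ℕ) < p),
        (-(x (σ i))) * (v (SDown σ ((i : ℕ) + 1)) - v (SDown σ (i : ℕ))) := by
    rw [cv_eq v hv _ (Fin.revPerm.trans σ) hmonoM]
    have step1 : ∑ i : Fin n, (fun i => max (-x i) 0) ((Fin.revPerm.trans σ) i) *
          (v (SUp (Fin.revPerm.trans σ) (i : ℕ)) - v (SUp (Fin.revPerm.trans σ) ((i : ℕ) + 1))) =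
        ∑ j : Fin n, max (-x (σ j)) 0 *
          (v (SDown σ ((j : ℕ) + 1)) - v (SDown σ (j : ℕ))) := by
      rw [← Equiv.sum_comp (Fin.revPerm)
        (fun j : Fin n => max (-x (σ j)) 0 * (v (SDown σ ((j : ℕ) + 1)) - v (SDown σ (j : ℕ))))]
      apply Finset.sum_congr rfl
      intro i _
      have hi := i.isLt
      simp only [Equiv.trans_apply, Fin.revPerm_apply, SUp_revPerm, Fin.val_rev]
      have h1 : n - (i : ℕ) = n - ((i : ℕ) + 1) + 1 := by omega
      rw [h1]
    rw [step1,
      ← Finset.sum_filter_add_sum_filter_not Finset.univ (fun i : Fin n => (i : ℕ) < p)]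
    have hz : ∑ i ∈ Finset.univ.filter (fun i : Fin n => ¬ (i : ℕ) < p),
        max (-x (σ i)) 0 * (v (SDown σ ((i : ℕ) + 1)) - v (SDown σ (i : ℕ))) = 0 := by
      apply Finset.sum_eq_zero
      intro i hi
      rw [Finset.mem_filter] at hi
      have : max (-x (σ i)) 0 = 0 :=
        max_eq_right (neg_nonpos.mpr (hpos i (by omega)))
      rw [this, zero_mul]
    rw [hz, add_zero]
    apply Finset.sum_congr rfl
    intro i hi
    rw [Finset.mem_filter] at hi
    rw [max_eq_left (by linarith [hneg i hi.2])]
  -- Step 3: rewrite the RHS indicator integrals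
  have hR1 : ∑ i ∈ Finset.univ.filter (fun i : Fin n => (i : ℕ) < p),
      x (σ i) * (Cv v (indTuple (SDown σ ((i : ℕ) + 1)) 1)
        - Cv v (indTuple (SDown σ (i : ℕ)) 1)) =
      ∑ i ∈ Finset.univ.filter (fun i : Fin n => (i : ℕ) < p),
        x (σ i) * (v (SDown σ ((i : ℕ) + 1)) - v (SDown σ (i : ℕ))) := by
    apply Finset.sum_congr rfl
    intro i hi
    rw [Finset.mem_filter] at hi
    rw [cv_ind_down v hv σ ((i : ℕ) + 1) (by omega), cv_ind_down v hv σ (i : ℕ) (by omega)]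
  have hR2 : ∑ i ∈ Finset.univ.filter (fun i : Fin n => p ≤ (i : ℕ)),
      x (σ i) * (Cv v (indTuple (SUp σ (i : ℕ)) 1)
        - Cv v (indTuple (SUp σ ((i : ℕ) + 1)) 1)) =
      ∑ i ∈ Finset.univ.filter (fun i : Fin n => p ≤ (i : ℕ)),
        x (σ i) * (v (SUp σ (i : ℕ)) - v (SUp σ ((i : ℕ) + 1))) := by
    apply Finset.sum_congr rfl
    intro i _
    have hi := i.isLt
    rw [cv_ind_up v hv σ (i : ℕ) (by omega), cv_ind_up v hv σ ((i : ℕ) + 1) (by omega)]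
  rw [e1, e2, hR1, hR2]
  rw [show ∑ i ∈ Finset.univ.filter (fun i : Fin n => (i : ℕ) < p),
      (-(x (σ i))) * (v (SDown σ ((i : ℕ) + 1)) - v (SDown σ (i : ℕ))) =
      -∑ i ∈ Finset.univ.filter (fun i : Fin n => (i : ℕ) < p),
      x (σ i) * (v (SDown σ ((i : ℕ) + 1)) - v (SDown σ (i : ℕ))) by
    rw [← Finset.sum_neg_distrib]
    exact Finset.sum_congr rfl (fun i _ => by ring)]
  ring
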